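/- Let t* ∈ (0, ∞) be finite, let c1, c5 > 0, and let φ : [0, t*) → ℝ be continuous on [0, t*), differentiable on (0, t*), with φ(0) > 0, φ(t) > 0 for all t, φ(t) → ∞ as t → t*⁻, and φ'(t) ≤ c1·φ(t) + c5·φ(t)³ for all t ∈ (0, t*). Then t* ≥ (1/(2c1))·log(1 + (c1/c5)·φ(0)⁻²). -/

import Mathlib

open Real Set Filter MeasureTheory

/-- ODE comparison core of Theorem 3.1 (lower bound of the blow-up time in 3D):
if `φ > 0` blows up at the finite time `tstar` and satisfies
`φ' ≤ c1 φ + c5 φ³` on `(0, tstar)`, then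
`tstar ≥ (1/(2 c1)) log (1 + (c1/c5) φ(0)⁻²)`. -/
theorem blow_up_time_lower_bound_3D
    (tstar c1 c5 : ℝ) (htstar : 0 < tstar) (hc1 : 0 < c1) (hc5 : 0 < c5)
    (φ : ℝ → ℝ)
    (hcont : ContinuousOn φ (Ico 0 tstar))
    (hdiff : ∀ t ∈ Ioo 0 tstar, DifferentiableAt ℝ φ t)
    (hφ0 : 0 < φ 0)
    (hpos : ∀ t ∈ Ico 0 tstar, 0 < φ t)
    (hblow : Tendsto φ (nhdsWithin tstar (Iio tstar)) atTop)
    (hineq : ∀ t ∈ Ioo 0 tstar, deriv φ t ≤ c1 * φ t + c5 * φ t ^ 3) :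
    tstar ≥ 1 / (2 * c1) * Real.log (1 + c1 / c5 * (φ 0 ^ 2)⁻¹) := by
  set F : ℝ → ℝ := fun x => (1 / (2 * c1)) * (Real.log (x ^ 2) - Real.log (c1 + c5 * x ^ 2))
    with hFdef
  set g : ℝ → ℝ := fun t => F (φ t) - t with hgdef
  -- key derivative computation
  have key : ∀ t ∈ Ioo 0 tstar,
      HasDerivAt g (deriv φ t / (φ t * (c1 + c5 * φ t ^ 2)) - 1) t := by
    intro t ht
    have hu : 0 < φ t := hpos t ⟨ht.1.le, ht.2⟩
    have hd := (hdiff t ht).hasDerivAt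
    have hsq : HasDerivAt (fun s => φ s ^ 2) ((2 : ℕ) * φ t ^ 1 * deriv φ t) t := hd.pow 2
    have hlog1 : HasDerivAt (fun s => Real.log (φ s ^ 2))
        (((2 : ℕ) * φ t ^ 1 * deriv φ t) / (φ t ^ 2)) t :=
      hsq.log (by positivity)
    have hden : (0:ℝ) < c1 + c5 * φ t ^ 2 := by positivity
    have hlog2 : HasDerivAt (fun s => Real.log (c1 + c5 * φ s ^ 2))
        ((c5 * ((2 : ℕ) * φ t ^ 1 * deriv φ t)) / (c1 + c5 * φ t ^ 2)) t :=
      ((hsq.const_mul c5).const_add c1).log hden.ne'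
    have hF : HasDerivAt g
        ((1 / (2 * c1)) * (((2 : ℕ) * φ t ^ 1 * deriv φ t) / (φ t ^ 2)
          - (c5 * ((2 : ℕ) * φ t ^ 1 * deriv φ t)) / (c1 + c5 * φ t ^ 2)) - 1) t := by
      have := ((hlog1.sub hlog2).const_mul (1 / (2 * c1))).sub (hasDerivAt_id t)
      exact this
    convert hF using 1
    field_simp
    ring
  have hganti : AntitoneOn g (Ico 0 tstar) := by
    apply antitoneOn_of_deriv_nonpos (convex_Ico 0 tstar)
    · apply ContinuousOn.sub _ continuousOn_id
      apply ContinuousOn.mul continuousOn_const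
      apply ContinuousOn.sub
      · exact (hcont.pow 2).log fun t ht => by have := hpos t ht; exact (pow_pos this 2).ne'
      · exact (continuousOn_const.add (continuousOn_const.mul (hcont.pow 2))).log
          fun t ht => by have := hpos t ht; exact (show (0:ℝ) < c1 + c5 * φ t ^ 2 by positivity).ne'
    · intro t ht
      rw [interior_Ico] at ht
      exact ((key t ht).differentiableAt).differentiableWithinAt
    · intro t ht
      rw [interior_Ico] at ht
      rw [(key t ht).deriv]
      have hu : 0 < φ t := hpos t ⟨ht.1.le, ht.2⟩
      have hden : (0:ℝ) < φ t * (c1 + c5 * φ t ^ 2) := by positivity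
      have h1 : deriv φ t / (φ t * (c1 + c5 * φ t ^ 2)) ≤ 1 := by
        rw [div_le_one hden]
        have := hineq t ht
        nlinarith
      linarith
  have hle : ∀ t ∈ Ico 0 tstar, F (φ t) - F (φ 0) ≤ t := by
    intro t ht
    have h0 : (0:ℝ) ∈ Ico 0 tstar := ⟨le_refl 0, htstar⟩
    have := hganti h0 ht ht.1
    simp only [hgdef] at this
    linarith
  -- limit of F at infinity
  have hFlim : Tendsto F atTop (nhds ((1 / (2 * c1)) * Real.log c5⁻¹)) := by
    have hpow : Tendsto (fun x : ℝ => x ^ 2) atTop atTop :=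
      tendsto_pow_atTop (n := 2) (by norm_num)
    have h0 : Tendsto (fun x : ℝ => c1 / x ^ 2) atTop (nhds 0) :=
      Tendsto.div_atTop tendsto_const_nhds hpow
    have h1 : Tendsto (fun x : ℝ => c1 / x ^ 2 + c5) atTop (nhds (0 + c5)) :=
      h0.add tendsto_const_nhds
    rw [zero_add] at h1
    have h2 : Tendsto (fun x : ℝ => (c1 / x ^ 2 + c5)⁻¹) atTop (nhds c5⁻¹) :=
      h1.inv₀ hc5.ne'
    have h3 : Tendsto (fun x : ℝ => x ^ 2 / (c1 + c5 * x ^ 2)) atTop (nhds c5⁻¹) := by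
      apply h2.congr'
      filter_upwards [eventually_ge_atTop (1:ℝ)] with x hx
      have hx0 : (0:ℝ) < x := lt_of_lt_of_le one_pos hx
      have hden : (0:ℝ) < c1 + c5 * x ^ 2 := by positivity
      have hx2 : (x:ℝ) ^ 2 ≠ 0 := by positivity
      have hs : c1 / x ^ 2 + c5 = (c1 + c5 * x ^ 2) / x ^ 2 := by
        field_simp
      rw [hs, inv_div]
    have h4 : Tendsto (fun x : ℝ => Real.log (x ^ 2 / (c1 + c5 * x ^ 2))) atTop
        (nhds (Real.log c5⁻¹)) :=
      (Real.continuousAt_log (inv_ne_zero hc5.ne')).tendsto.comp h3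
    have h5 : Tendsto (fun x : ℝ => Real.log (x ^ 2) - Real.log (c1 + c5 * x ^ 2)) atTop
        (nhds (Real.log c5⁻¹)) := by
      apply h4.congr'
      filter_upwards [eventually_ge_atTop (1:ℝ)] with x hx
      have hx0 : (0:ℝ) < x := lt_of_lt_of_le one_pos hx
      have hden : (0:ℝ) < c1 + c5 * x ^ 2 := by positivity
      rw [Real.log_div (by positivity) hden.ne']
    exact h5.const_mul _
  have hcomp : Tendsto (fun t => F (φ t)) (nhdsWithin tstar (Iio tstar))
      (nhds ((1 / (2 * c1)) * Real.log c5⁻¹)) := hFlim.comp hblow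
  have hev : ∀ᶠ t in nhdsWithin tstar (Iio tstar), F (φ t) - F (φ 0) ≤ tstar := by
    have hpos' : ∀ᶠ t in nhdsWithin tstar (Iio tstar), 0 < t :=
      eventually_nhdsWithin_of_eventually_nhds (eventually_gt_nhds htstar)
    filter_upwards [hpos', self_mem_nhdsWithin] with t ht1 ht2
    have := hle t ⟨ht1.le, ht2⟩
    have : F (φ t) - F (φ 0) ≤ t := this
    exact this.trans (le_of_lt ht2)
  have hfinal : (1 / (2 * c1)) * Real.log c5⁻¹ - F (φ 0) ≤ tstar :=
    le_of_tendsto (hcomp.sub_const (F (φ 0))) hev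
  have harg : 1 + c1 / c5 * (φ 0 ^ 2)⁻¹ = (c1 + c5 * φ 0 ^ 2) / (c5 * φ 0 ^ 2) := by
    field_simp
    ring
  have hden0 : (0:ℝ) < c1 + c5 * φ 0 ^ 2 := by positivity
  have hrw : 1 / (2 * c1) * Real.log (1 + c1 / c5 * (φ 0 ^ 2)⁻¹)
      = (1 / (2 * c1)) * Real.log c5⁻¹ - F (φ 0) := by
    rw [harg, Real.log_div hden0.ne' (by positivity), Real.log_mul hc5.ne' (by positivity),
      Real.log_inv, hFdef]
    ring
  rw [ge_iff_le, hrw]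
  exact hfinal
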